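/- For n >= 1, the number of ascent sequences of length n avoiding the four patterns 0101, 0102, 0120, and 0121 equals 2^{n-1} + C(n-1, 2). -/

import Mathlib

/-- Number of ascents of a sequence (list) of natural numbers. -/
def asc (l : List ℕ) : ℕ :=
  ((List.range (l.length - 1)).filter (fun j => l.getD j 0 < l.getD (j + 1) 0)).length

/-- `x` is an ascent sequence: nonempty, starts with 0, and each later entry is
at most one more than the number of ascents of the preceding prefix. -/
def IsAscSeq (x : List ℕ) : Prop :=
  x ≠ [] ∧ x.getD 0 0 = 0 ∧
    ∀ i, 1 ≤ i → i < x.length → x.getD i 0 ≤ 1 + asc (x.take i)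

/-- `x` contains the pattern `p`: some subsequence of `x` is order-isomorphic
(including equalities) to `p`, i.e. its reduction equals `p`. -/
def Contains (p x : List ℕ) : Prop :=
  ∃ y : List ℕ, y.Sublist x ∧ y.length = p.length ∧
    ∀ i j, i < p.length → j < p.length →
      (y.getD i 0 < y.getD j 0 ↔ p.getD i 0 < p.getD j 0)

/-- `x` avoids the pattern `p`. -/
def Avoids (p x : List ℕ) : Prop := ¬ Contains p x

/-- partial sums of booleans, starting from c -/
def psum : ℕ → List Bool → List ℕ
  | c, [] => [c]
  | c, b :: bs => c :: psum (c + b.toNat) bs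

@[simp] lemma psum_length (c : ℕ) (bs : List Bool) : (psum c bs).length = bs.length + 1 := by
  induction bs generalizing c with
  | nil => rfl
  | cons b bs ih => simp [psum, ih]

@[simp] lemma psum_getD_zero (c : ℕ) (bs : List Bool) : (psum c bs).getD 0 0 = c := by
  cases bs <;> rfl

lemma psum_getD_succ (c : ℕ) (bs : List Bool) (k : ℕ) (hk : k < bs.length) :
    (psum c bs).getD (k + 1) 0 = (psum c bs).getD k 0 + (bs.getD k false).toNat := by
  induction bs generalizing c k with
  | nil => simp at hk
  | cons b bs ih =>
    cases k with
    | zero =>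
      simp only [psum, List.getD_cons_succ, List.getD_cons_zero]
      exact psum_getD_zero _ _
    | succ k =>
      have hk' : k < bs.length := by simpa using hk
      simpa [psum] using ih (c + b.toNat) k hk'

lemma psum_inj {c : ℕ} {bs bs' : List Bool} (h : psum c bs = psum c bs') : bs = bs' := by
  induction bs generalizing c bs' with
  | nil =>
    cases bs' with
    | nil => rfl
    | cons b' bs' =>
      have := congrArg List.length h
      simp [psum] at this
  | cons b bs ih =>
    cases bs' with
    | nil =>
      have := congrArg List.length h
      simp [psum] at this
    | cons b' bs' =>
      simp only [psum, List.cons.injEq] at h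
      have hb : c + b.toNat = c + b'.toNat := by
        rw [← psum_getD_zero (c + b.toNat) bs, h.2, psum_getD_zero]
      have hbb : b = b' := by cases b <;> cases b' <;> simp_all
      subst hbb
      exact congrArg (b :: ·) (ih h.2)

/-- the list 0^(i+1) 1^(j-i) 0^(n-1-j) -/
def sB (n i j : ℕ) : List ℕ :=
  List.replicate (i + 1) 0 ++ List.replicate (j - i) 1 ++ List.replicate (n - 1 - j) 0

lemma sB_length {n i j : ℕ} (hij : i < j) (hj : j < n - 1) : (sB n i j).length = n := by
  simp [sB]; omega

lemma getD_replicate' (a d k m : ℕ) : (List.replicate k a).getD m d = if m < k then a else d := by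
  split
  · rw [List.getD_eq_getElem _ _ (by simpa using ‹m < k›)]; simp
  · exact List.getD_eq_default _ _ (by simpa using Nat.le_of_not_lt ‹¬ m < k›)

lemma sB_getD {n i j : ℕ} (hij : i < j) (hj : j < n - 1) (m : ℕ) :
    (sB n i j).getD m 0 = if i < m ∧ m ≤ j then 1 else 0 := by
  unfold sB
  rw [List.append_assoc]
  rcases lt_or_ge m (i + 1) with h | h
  · rw [List.getD_append _ _ _ _ (by simpa using h), getD_replicate' _ _ _ _]
    have : ¬ (i < m ∧ m ≤ j) := by omega
    simp [h, this]
  · rw [List.getD_append_right _ _ _ _ (by simpa using h)]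
    simp only [List.length_replicate]
    rcases lt_or_ge (m - (i + 1)) (j - i) with h2 | h2
    · rw [List.getD_append _ _ _ _ (by simpa using h2), getD_replicate' _ _ _ _]
      have : i < m ∧ m ≤ j := by omega
      simp [h2, this]
    · rw [List.getD_append_right _ _ _ _ (by simpa using h2), getD_replicate' _ _ _ _]
      have : ¬ (i < m ∧ m ≤ j) := by omega
      simp [this]

def df (l : List ℕ) (m : ℕ) : ℕ :=
  ((List.range m).filter (fun j => l.getD j 0 < l.getD (j + 1) 0)).length

lemma asc_eq_df (l : List ℕ) : asc l = df l (l.length - 1) := rfl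

lemma df_succ (l : List ℕ) (m : ℕ) :
    df l (m + 1) = df l m + if l.getD m 0 < l.getD (m + 1) 0 then 1 else 0 := by
  simp only [df, List.range_succ, List.filter_append, List.length_append]
  split <;> simp_all

lemma getD_take (l : List ℕ) (m j : ℕ) (h : j < m) : (l.take m).getD j 0 = l.getD j 0 := by
  rcases lt_or_ge j l.length with h2 | h2
  · rw [List.getD_eq_getElem _ _ (by simp; omega), List.getD_eq_getElem _ _ h2]
    exact List.getElem_take
  · rw [List.getD_eq_default _ _ (by simp; omega), List.getD_eq_default _ _ h2]

lemma asc_take (l : List ℕ) (m : ℕ) (hm : m ≤ l.length) : asc (l.take m) = df l (m - 1) := by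
  have hlen : (l.take m).length = m := by simp [hm]
  rw [asc_eq_df, hlen]
  unfold df
  congr 1
  apply List.filter_congr
  intro j hj
  rw [List.mem_range] at hj
  rw [getD_take _ _ _ (by omega), getD_take _ _ _ (by omega)]

lemma mono_of (f : ℕ → ℕ) (k : ℕ) (h : ∀ u, u < k → f u ≤ f (u + 1)) :
    ∀ u v, u ≤ v → v ≤ k → f u ≤ f v := by
  intro u v huv hvk
  induction v, huv using Nat.le_induction with
  | base => exact le_refl _
  | succ n hn ih => exact le_trans (ih (by omega)) (h n (by omega))

lemma ivt (f : ℕ → ℕ) (k d : ℕ) (hstep : ∀ u, u < k → f (u + 1) ≤ f u + 1)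
    (h0 : f 0 ≤ d) (hk : d ≤ f k) : ∃ s, s ≤ k ∧ f s = d := by
  induction k with
  | zero => exact ⟨0, le_refl _, by omega⟩
  | succ k ih =>
    rcases le_or_gt d (f k) with h | h
    · obtain ⟨s, hs, hf⟩ := ih (fun u hu => hstep u (by omega)) h
      exact ⟨s, by omega, hf⟩
    · have := hstep k (by omega); exact ⟨k + 1, le_refl _, by omega⟩

lemma df_le (l : List ℕ) (i : ℕ) (h0 : l.getD 0 0 = 0)
    (hmono : ∀ u, u < i → l.getD u 0 ≤ l.getD (u + 1) 0) : df l i ≤ l.getD i 0 := by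
  induction i with
  | zero => simp [df, h0]
  | succ i ih =>
    rw [df_succ]
    have h1 := ih (fun u hu => hmono u (by omega))
    have h2 := hmono i (by omega)
    split <;> omega

lemma le_df (l : List ℕ) (i : ℕ) (h0 : l.getD 0 0 = 0)
    (hstep : ∀ u, u < i → l.getD (u + 1) 0 ≤ l.getD u 0 + 1) : l.getD i 0 ≤ df l i := by
  induction i with
  | zero => omega
  | succ i ih =>
    rw [df_succ]
    have h1 := ih (fun u hu => hstep u (by omega))
    have h2 := hstep i (by omega)
    split <;> omega

lemma sublist_four (x : List ℕ) {p0 p1 p2 p3 : ℕ} (h01 : p0 < p1) (h12 : p1 < p2)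
    (h23 : p2 < p3) (h3 : p3 < x.length) :
    [x.getD p0 0, x.getD p1 0, x.getD p2 0, x.getD p3 0].Sublist x := by
  have h0 : p0 < x.length := by omega
  have h1 : p1 < x.length := by omega
  have h2 : p2 < x.length := by omega
  have := List.map_getElem_sublist (l := x)
    (is := [⟨p0, h0⟩, ⟨p1, h1⟩, ⟨p2, h2⟩, ⟨p3, h3⟩]) (by simp; omega)
  simp only [List.map_cons, List.map_nil, List.get_eq_getElem, Fin.getElem_fin] at this
  rw [List.getD_eq_getElem _ _ h0, List.getD_eq_getElem _ _ h1,
    List.getD_eq_getElem _ _ h2, List.getD_eq_getElem _ _ h3]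
  exact this

lemma contains_0121 (x : List ℕ) {p0 p1 p2 p3 : ℕ} (h01 : p0 < p1) (h12 : p1 < p2)
    (h23 : p2 < p3) (h3 : p3 < x.length)
    (v01 : x.getD p0 0 < x.getD p1 0) (v12 : x.getD p1 0 < x.getD p2 0)
    (v3 : x.getD p3 0 = x.getD p1 0) : Contains [0, 1, 2, 1] x := by
  set a := x.getD p0 0 with ha
  set b := x.getD p1 0 with hb
  set c := x.getD p2 0 with hc
  set d := x.getD p3 0 with hd
  refine ⟨[a, b, c, d], ?_, by simp, ?_⟩
  · have := sublist_four x h01 h12 h23 h3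
    rw [← ha, ← hb, ← hc, ← hd] at this
    exact this
  · intro i j hi hj
    simp only [List.length_cons, List.length_nil] at hi hj
    interval_cases i <;> interval_cases j <;> simp <;> omega

lemma contains_0120 (x : List ℕ) {p0 p1 p2 p3 : ℕ} (h01 : p0 < p1) (h12 : p1 < p2)
    (h23 : p2 < p3) (h3 : p3 < x.length)
    (v01 : x.getD p0 0 < x.getD p1 0) (v12 : x.getD p1 0 < x.getD p2 0)
    (v3 : x.getD p3 0 = x.getD p0 0) : Contains [0, 1, 2, 0] x := by
  set a := x.getD p0 0 with ha
  set b := x.getD p1 0 with hb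
  set c := x.getD p2 0 with hc
  set d := x.getD p3 0 with hd
  refine ⟨[a, b, c, d], ?_, by simp, ?_⟩
  · have := sublist_four x h01 h12 h23 h3
    rw [← ha, ← hb, ← hc, ← hd] at this
    exact this
  · intro i j hi hj
    simp only [List.length_cons, List.length_nil] at hi hj
    interval_cases i <;> interval_cases j <;> simp <;> omega

lemma contains_0101 (x : List ℕ) {p0 p1 p2 p3 : ℕ} (h01 : p0 < p1) (h12 : p1 < p2)
    (h23 : p2 < p3) (h3 : p3 < x.length)
    (v01 : x.getD p0 0 < x.getD p1 0) (v2 : x.getD p2 0 = x.getD p0 0)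
    (v3 : x.getD p3 0 = x.getD p1 0) : Contains [0, 1, 0, 1] x := by
  set a := x.getD p0 0 with ha
  set b := x.getD p1 0 with hb
  set c := x.getD p2 0 with hc
  set d := x.getD p3 0 with hd
  refine ⟨[a, b, c, d], ?_, by simp, ?_⟩
  · have := sublist_four x h01 h12 h23 h3
    rw [← ha, ← hb, ← hc, ← hd] at this
    exact this
  · intro i j hi hj
    simp only [List.length_cons, List.length_nil] at hi hj
    interval_cases i <;> interval_cases j <;> simp <;> omega

lemma contains_0102 (x : List ℕ) {p0 p1 p2 p3 : ℕ} (h01 : p0 < p1) (h12 : p1 < p2)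
    (h23 : p2 < p3) (h3 : p3 < x.length)
    (v01 : x.getD p0 0 < x.getD p1 0) (v2 : x.getD p2 0 = x.getD p0 0)
    (v3 : x.getD p1 0 < x.getD p3 0) : Contains [0, 1, 0, 2] x := by
  set a := x.getD p0 0 with ha
  set b := x.getD p1 0 with hb
  set c := x.getD p2 0 with hc
  set d := x.getD p3 0 with hd
  refine ⟨[a, b, c, d], ?_, by simp, ?_⟩
  · have := sublist_four x h01 h12 h23 h3
    rw [← ha, ← hb, ← hc, ← hd] at this
    exact this
  · intro i j hi hj
    simp only [List.length_cons, List.length_nil] at hi hj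
    interval_cases i <;> interval_cases j <;> simp <;> omega

lemma avoids_of_mono (x p : List ℕ) (hp : p.length = 4) (i0 j0 : ℕ) (hj0 : j0 < i0) (hi0 : i0 < 4)
    (hval : p.getD i0 0 < p.getD j0 0)
    (hmono : ∀ u, u + 1 < x.length → x.getD u 0 ≤ x.getD (u + 1) 0) : Avoids p x := by
  rintro ⟨y, hsub, hlen, hiff⟩
  rw [hp] at hlen
  have h1 : y.getD i0 0 < y.getD j0 0 :=
    (hiff i0 j0 (by rw [hp]; omega) (by rw [hp]; omega)).mpr hval
  have hxp : x.Pairwise (· ≤ ·) := by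
    rw [List.pairwise_iff_getElem]
    intro u v hu hv huv
    have := mono_of (fun m => x.getD m 0) (x.length - 1)
      (fun w hw => hmono w (by omega)) u v (by omega) (by omega)
    change x.getD u 0 ≤ x.getD v 0 at this
    rwa [List.getD_eq_getElem _ _ hu, List.getD_eq_getElem _ _ hv] at this
  have hyp := List.Pairwise.sublist hsub hxp
  rw [List.pairwise_iff_getElem] at hyp
  have h2 := hyp j0 i0 (by omega) (by omega) hj0
  change _ ≤ _ at h2
  rw [List.getD_eq_getElem y 0 (show i0 < y.length by omega),
    List.getD_eq_getElem y 0 (show j0 < y.length by omega)] at h1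
  omega

lemma avoids_of_le_one (x p : List ℕ) (hp : p.length = 4) (a b c : ℕ)
    (ha : a < 4) (hb : b < 4) (hc : c < 4)
    (hab : p.getD a 0 < p.getD b 0) (hbc : p.getD b 0 < p.getD c 0)
    (hle : ∀ v ∈ x, v ≤ 1) : Avoids p x := by
  rintro ⟨y, hsub, hlen, hiff⟩
  rw [hp] at hlen
  have h1 : y.getD a 0 < y.getD b 0 := (hiff a b (by rw [hp]; omega) (by rw [hp]; omega)).mpr hab
  have h2 : y.getD b 0 < y.getD c 0 := (hiff b c (by rw [hp]; omega) (by rw [hp]; omega)).mpr hbc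
  have hmem : y.getD c 0 ∈ y := by
    rw [List.getD_eq_getElem _ _ (by omega)]; exact List.getElem_mem _
  have h3 : y.getD c 0 ≤ 1 := hle _ (hsub.subset hmem)
  omega

lemma sB_le_one {n i j : ℕ} : ∀ v ∈ sB n i j, v ≤ 1 := by
  intro v hv
  simp only [sB, List.mem_append, List.mem_replicate] at hv
  rcases hv with (⟨_, rfl⟩ | ⟨_, rfl⟩) | ⟨_, rfl⟩ <;> omega

lemma sB_avoids_0101 {n i j : ℕ} (hij : i < j) (hj : j < n - 1) :
    Avoids [0, 1, 0, 1] (sB n i j) := by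
  rintro ⟨y, hsub, hlen, hiff⟩
  simp only [List.length_cons, List.length_nil] at hlen
  have hle := @sB_le_one n i j
  have e01 : y.getD 0 0 < y.getD 1 0 := (hiff 0 1 (by simp) (by simp)).mpr (by simp)
  have e21 : y.getD 2 0 < y.getD 1 0 := (hiff 2 1 (by simp) (by simp)).mpr (by simp)
  have e23 : y.getD 2 0 < y.getD 3 0 := (hiff 2 3 (by simp) (by simp)).mpr (by simp)
  have e02 : ¬ y.getD 0 0 < y.getD 2 0 := fun h => by
    have := (hiff 0 2 (by simp) (by simp)).mp h; simp at this
  have e20 : ¬ y.getD 2 0 < y.getD 0 0 := fun h => by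
    have := (hiff 2 0 (by simp) (by simp)).mp h; simp at this
  have e13 : ¬ y.getD 1 0 < y.getD 3 0 := fun h => by
    have := (hiff 1 3 (by simp) (by simp)).mp h; simp at this
  have e31 : ¬ y.getD 3 0 < y.getD 1 0 := fun h => by
    have := (hiff 3 1 (by simp) (by simp)).mp h; simp at this
  have m1 : y.getD 1 0 ≤ 1 := hle _ (hsub.subset (by
    rw [List.getD_eq_getElem _ _ (by omega)]; exact List.getElem_mem _))
  have hy : y = [0, 1, 0, 1] := by
    have g0 := List.getD_eq_getElem y 0 (show 0 < y.length by omega)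
    have g1 := List.getD_eq_getElem y 0 (show 1 < y.length by omega)
    have g2 := List.getD_eq_getElem y 0 (show 2 < y.length by omega)
    have g3 := List.getD_eq_getElem y 0 (show 3 < y.length by omega)
    apply List.ext_getElem (by simp [hlen])
    intro m hm hm'
    simp only [hlen] at hm
    interval_cases m <;>
      simp only [List.getElem_cons_zero, List.getElem_cons_succ] <;> omega
  rw [hy] at hsub
  unfold sB at hsub
  rw [List.append_assoc, List.sublist_append_iff] at hsub
  obtain ⟨l1, l23, heq, hs1, hs23⟩ := hsub
  rw [List.sublist_append_iff] at hs23
  obtain ⟨l2, l3, heq2, hs2, hs3⟩ := hs23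
  rw [List.sublist_replicate_iff] at hs1 hs2 hs3
  obtain ⟨k1, _, rfl⟩ := hs1
  obtain ⟨k2, _, rfl⟩ := hs2
  obtain ⟨k3, _, rfl⟩ := hs3
  subst heq2
  have c1 : k2 = 2 := by
    have := congrArg (List.count 1) heq
    simpa [List.count_append, List.count_replicate] using this.symm
  have c0 : k1 + k3 = 2 := by
    have := congrArg (List.count 0) heq
    simp [List.count_append, List.count_replicate] at this
    omega
  have hk3 : k3 = 2 - k1 := by omega
  have hk1 : k1 ≤ 2 := by omega
  subst c1 hk3
  interval_cases k1 <;> simp [List.replicate_succ] at heq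

def Aset (n : ℕ) : Finset (List ℕ) :=
  Finset.image (fun f : Fin (n - 1) → Bool => psum 0 (List.ofFn f)) Finset.univ

def Bset (n : ℕ) : Finset (List ℕ) :=
  (Finset.range (n - 1)).biUnion (fun j => (Finset.range j).image (fun i => sB n i j))

lemma psum_mono_step (bs : List Bool) (u : ℕ) (hu : u < bs.length) :
    (psum 0 bs).getD u 0 ≤ (psum 0 bs).getD (u + 1) 0 ∧
    (psum 0 bs).getD (u + 1) 0 ≤ (psum 0 bs).getD u 0 + 1 := by
  rw [psum_getD_succ 0 bs u hu]
  rcases (bs.getD u false) <;> simp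

lemma aset_props {n : ℕ} (hn : 1 ≤ n) (x : List ℕ) (hx : x ∈ Aset n) :
    x.length = n ∧ IsAscSeq x ∧ Avoids [0, 1, 0, 1] x ∧ Avoids [0, 1, 0, 2] x ∧
      Avoids [0, 1, 2, 0] x ∧ Avoids [0, 1, 2, 1] x := by
  rw [Aset, Finset.mem_image] at hx
  obtain ⟨f, -, rfl⟩ := hx
  set x := psum 0 (List.ofFn f) with hxdef
  have hlen : x.length = n := by rw [hxdef, psum_length]; simp; omega
  have hbslen : (List.ofFn f).length = n - 1 := by simp
  have hmono : ∀ u, u + 1 < x.length → x.getD u 0 ≤ x.getD (u + 1) 0 := by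
    intro u hu
    exact (psum_mono_step (List.ofFn f) u (by omega)).1
  have hstep : ∀ u, u + 1 < x.length → x.getD (u + 1) 0 ≤ x.getD u 0 + 1 := by
    intro u hu
    exact (psum_mono_step (List.ofFn f) u (by omega)).2
  have h0 : x.getD 0 0 = 0 := psum_getD_zero _ _
  refine ⟨hlen, ⟨?_, h0, ?_⟩, ?_, ?_, ?_, ?_⟩
  · intro h; rw [h] at hlen; simp at hlen; omega
  · intro i hi1 hi2
    rw [asc_take x i (by omega)]
    have hle := le_df x i h0 (fun u hu => hstep u (by omega))
    have : df x i = df x (i - 1) + if x.getD (i-1) 0 < x.getD (i-1+1) 0 then 1 else 0 := by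
      have := df_succ x (i - 1)
      rw [show i - 1 + 1 = i by omega] at this ⊢
      exact this
    split at this <;> omega
  · exact avoids_of_mono x _ rfl 2 1 (by omega) (by omega) (by simp) hmono
  · exact avoids_of_mono x _ rfl 2 1 (by omega) (by omega) (by simp) hmono
  · exact avoids_of_mono x _ rfl 3 2 (by omega) (by omega) (by simp) hmono
  · exact avoids_of_mono x _ rfl 3 2 (by omega) (by omega) (by simp) hmono

lemma bset_props {n : ℕ} (x : List ℕ) (hx : x ∈ Bset n) :
    x.length = n ∧ IsAscSeq x ∧ Avoids [0, 1, 0, 1] x ∧ Avoids [0, 1, 0, 2] x ∧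
      Avoids [0, 1, 2, 0] x ∧ Avoids [0, 1, 2, 1] x := by
  rw [Bset, Finset.mem_biUnion] at hx
  obtain ⟨j, hj, hx⟩ := hx
  rw [Finset.mem_image] at hx
  obtain ⟨i, hi, rfl⟩ := hx
  rw [Finset.mem_range] at hj hi
  have hlen := sB_length hi hj
  have hle := @sB_le_one n i j
  refine ⟨hlen, ⟨?_, ?_, ?_⟩, ?_, ?_, ?_, ?_⟩
  · intro h; rw [h] at hlen; simp at hlen; omega
  · rw [sB_getD hi hj 0]; simp
  · intro m hm1 hm2
    have : (sB n i j).getD m 0 ≤ 1 := by rw [sB_getD hi hj m]; split <;> omega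
    omega
  · exact sB_avoids_0101 hi hj
  · exact avoids_of_le_one _ _ rfl 0 1 3 (by omega) (by omega) (by omega) (by simp) (by simp) hle
  · exact avoids_of_le_one _ _ rfl 0 1 2 (by omega) (by omega) (by omega) (by simp) (by simp) hle
  · exact avoids_of_le_one _ _ rfl 0 1 2 (by omega) (by omega) (by omega) (by simp) (by simp) hle

lemma forward {n : ℕ} (hn : 1 ≤ n) (x : List ℕ) (hlen : x.length = n) (hasc : IsAscSeq x)
    (hA1 : Avoids [0, 1, 0, 1] x) (hA2 : Avoids [0, 1, 0, 2] x)
    (hA3 : Avoids [0, 1, 2, 0] x) (hA4 : Avoids [0, 1, 2, 1] x) :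
    x ∈ Aset n ∪ Bset n := by
  obtain ⟨hne, h0, hcond⟩ := hasc
  -- the ascent-sequence step bound, assuming monotone below u
  have hstep : ∀ u, u + 1 < n → (∀ v, v < u → x.getD v 0 ≤ x.getD (v + 1) 0) →
      x.getD (u + 1) 0 ≤ x.getD u 0 + 1 := by
    intro u hu hmono
    have hc := hcond (u + 1) (by omega) (by omega)
    rw [asc_take x (u + 1) (by omega)] at hc
    have hd := df_le x u h0 hmono
    simp only [Nat.add_sub_cancel] at hc
    omega
  by_cases hmono : ∀ u, u + 1 < n → x.getD u 0 ≤ x.getD (u + 1) 0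
  · -- weakly increasing case
    rw [Finset.mem_union]
    left
    rw [Aset, Finset.mem_image]
    have hstep' : ∀ u, u + 1 < n → x.getD (u + 1) 0 ≤ x.getD u 0 + 1 := by
      intro u hu
      exact hstep u hu (fun v hv => hmono v (by omega))
    refine ⟨fun u => decide (x.getD u.1 0 < x.getD (u.1 + 1) 0), Finset.mem_univ _, ?_⟩
    set F : Fin (n - 1) → Bool := fun u => decide (x.getD u.1 0 < x.getD (u.1 + 1) 0) with hF
    have key : ∀ m, m < n → (psum 0 (List.ofFn F)).getD m 0 = x.getD m 0 := by
      intro m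
      induction m with
      | zero => intro _; rw [psum_getD_zero, h0]
      | succ m ih =>
        intro hm
        have hm' : m < (List.ofFn F).length := by simp; omega
        rw [psum_getD_succ _ _ _ hm', ih (by omega)]
        have hFm : (List.ofFn F).getD m false = F ⟨m, by simp at hm' ⊢; omega⟩ := by
          rw [List.getD_eq_getElem _ _ hm']; simp
        have hval : ((List.ofFn F).getD m false).toNat
            = if x.getD m 0 < x.getD (m + 1) 0 then 1 else 0 := by
          rw [hFm]
          show (decide (x.getD m 0 < x.getD (m + 1) 0)).toNat = _
          by_cases hlt : x.getD m 0 < x.getD (m + 1) 0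
          · rw [decide_eq_true hlt, if_pos hlt]; rfl
          · rw [decide_eq_false hlt, if_neg hlt]; rfl
        rw [hval]
        have h1 := hstep' m hm
        have h2 := hmono m hm
        split <;> omega
    apply List.ext_getElem (by simp; omega)
    intro m hm1 hm2
    have := key m (by omega)
    rwa [List.getD_eq_getElem _ _ hm1, List.getD_eq_getElem _ _ hm2] at this
  · -- descent case
    rw [Finset.mem_union]
    right
    push_neg at hmono
    have hex : ∃ u, u + 1 < n ∧ x.getD (u + 1) 0 < x.getD u 0 := by
      obtain ⟨u, hu1, hu2⟩ := hmono
      exact ⟨u, hu1, by omega⟩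
    classical
    obtain ⟨k, ⟨hk1n, hd⟩, hkmin⟩ :
        ∃ k, (k + 1 < n ∧ x.getD (k + 1) 0 < x.getD k 0) ∧
          ∀ u, u < k → ¬(u + 1 < n ∧ x.getD (u + 1) 0 < x.getD u 0) :=
      ⟨Nat.find hex, Nat.find_spec hex, fun u hu => Nat.find_min hex hu⟩
    have hprefmono : ∀ u v, u ≤ v → v ≤ k → x.getD u 0 ≤ x.getD v 0 := by
      apply mono_of
      intro u hu
      have := hkmin u hu
      push_neg at this
      rcases Nat.lt_or_ge (x.getD (u+1) 0) (x.getD u 0) with h | h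
      · exact absurd (this (by omega)) (by omega)
      · exact h
    have hstepk : ∀ u, u < k → x.getD (u + 1) 0 ≤ x.getD u 0 + 1 := by
      intro u hu
      exact hstep u (by omega) (fun v hv => hprefmono v (v + 1) (by omega) (by omega))
    have hM1 : x.getD k 0 = 1 := by
      by_contra hM
      have hM2 : 2 ≤ x.getD k 0 := by omega
      rcases Nat.eq_zero_or_pos (x.getD (k + 1) 0) with hd0 | hd1
      · -- find t with value 1, use pattern 0120
        obtain ⟨t, htk, ht⟩ := ivt (fun m => x.getD m 0) k 1 hstepk
          (by show x.getD 0 0 ≤ 1; omega) (by show (1:ℕ) ≤ x.getD k 0; omega)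
        change x.getD t 0 = 1 at ht
        have ht0 : 0 < t := by
          rcases Nat.eq_zero_or_pos t with rfl | h
          · omega
          · exact h
        have htk' : t < k := by
          rcases Nat.lt_or_ge t k with h | h
          · exact h
          · have heq : t = k := by omega
            rw [heq] at ht; omega
        exact hA3 (contains_0120 x (p0 := 0) (p1 := t) (p2 := k) (p3 := k + 1) ht0 htk' (by omega) (by omega)
          (by omega) (by omega) (by omega))
      · -- find s with value d, use pattern 0121
        obtain ⟨s, hsk, hs⟩ := ivt (fun m => x.getD m 0) k (x.getD (k + 1) 0) hstepk
          (by show x.getD 0 0 ≤ _; omega) (by show x.getD (k + 1) 0 ≤ x.getD k 0; omega)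
        change x.getD s 0 = x.getD (k + 1) 0 at hs
        have hs0 : 0 < s := by
          rcases Nat.eq_zero_or_pos s with rfl | h
          · omega
          · exact h
        have hsk' : s < k := by
          rcases Nat.lt_or_ge s k with h | h
          · exact h
          · have heq : s = k := by omega
            rw [heq] at hs; omega
        exact hA4 (contains_0121 x (p0 := 0) (p1 := s) (p2 := k) (p3 := k + 1) hs0 hsk' (by omega) (by omega)
          (by omega) (by omega) (by omega))
    have hd0 : x.getD (k + 1) 0 = 0 := by omega
    have hexa : ∃ a, x.getD a 0 = 1 := ⟨k, hM1⟩
    obtain ⟨a, ha, hamin⟩ : ∃ a, x.getD a 0 = 1 ∧ ∀ u, u < a → x.getD u 0 ≠ 1 :=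
      ⟨Nat.find hexa, Nat.find_spec hexa, fun u hu => Nat.find_min hexa hu⟩
    have hak : a ≤ k := by
      by_contra h
      exact hamin k (by omega) hM1
    have ha1 : 1 ≤ a := by
      rcases Nat.eq_zero_or_pos a with h | h
      · rw [h] at ha; omega
      · exact h
    have htail : ∀ m, k + 1 < m → m < n → x.getD m 0 = 0 := by
      intro m hm1 hm2
      by_contra hne0
      have he1 : 1 ≤ x.getD m 0 := by omega
      rcases Nat.lt_or_ge 1 (x.getD m 0) with he2 | he2
      · exact hA2 (contains_0102 x (p0 := 0) (p1 := a) (p2 := k + 1) (p3 := m) (by omega) (by omega) hm1 (by omega)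
          (by omega) (by omega) (by omega))
      · exact hA1 (contains_0101 x (p0 := 0) (p1 := a) (p2 := k + 1) (p3 := m) (by omega) (by omega) hm1 (by omega)
          (by omega) (by omega) (by omega))
    rw [Bset, Finset.mem_biUnion]
    refine ⟨k, Finset.mem_range.mpr (by omega), ?_⟩
    rw [Finset.mem_image]
    refine ⟨a - 1, Finset.mem_range.mpr (by omega), ?_⟩
    have hij : a - 1 < k := by omega
    have hjn : k < n - 1 := by omega
    apply List.ext_getElem (by rw [sB_length hij hjn, hlen])
    intro m hm1 hm2
    rw [← List.getD_eq_getElem _ 0 hm1, ← List.getD_eq_getElem _ 0 hm2]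
    rw [sB_getD hij hjn m]
    have hmn : m < n := by omega
    split
    · -- a ≤ m ≤ k : value 1
      rename_i hcondm
      have h1 := hprefmono a m (by omega) (by omega)
      have h2 := hprefmono m k (by omega) (by omega)
      omega
    · rename_i hcondm
      rw [not_and_or] at hcondm
      rcases hcondm with h | h
      · -- m ≤ a - 1, i.e. m < a
        have hma : m < a := by omega
        have h1 := hprefmono m k (by omega) (by omega)
        have h2 : x.getD m 0 ≠ 1 := hamin m hma
        omega
      · -- m > k
        have hmk : k < m := by omega
        rcases Nat.eq_or_lt_of_le (show k + 1 ≤ m by omega) with h | h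
        · rw [← h]; omega
        · rw [htail m (by omega) (by omega)]

lemma card_Aset {n : ℕ} (hn : 1 ≤ n) : (Aset n).card = 2 ^ (n - 1) := by
  rw [Aset, Finset.card_image_of_injective _ (fun f g h => List.ofFn_injective (psum_inj h))]
  simp [Fintype.card_fun]

lemma card_Bset {n : ℕ} : (Bset n).card = (n - 1).choose 2 := by
  rw [Bset, Finset.card_biUnion]
  · have hsum : ∀ j ∈ Finset.range (n - 1),
        ((Finset.range j).image (fun i => sB n i j)).card = j := by
      intro j hj
      rw [Finset.mem_range] at hj
      rw [Finset.card_image_of_injOn, Finset.card_range]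
      intro i hi i' hi' heq
      rw [Finset.coe_range, Set.mem_Iio] at hi hi'
      by_contra hne
      rcases Nat.lt_or_ge i i' with h | h
      · have := congrArg (fun l => l.getD (i + 1) 0) heq
        simp only [sB_getD hi hj, sB_getD hi' hj] at this
        split_ifs at this <;> omega
      · have hlt : i' < i := by omega
        have := congrArg (fun l => l.getD (i' + 1) 0) heq
        simp only [sB_getD hi hj, sB_getD hi' hj] at this
        split_ifs at this <;> omega
    rw [Finset.sum_congr rfl hsum, Finset.sum_range_id, Nat.choose_two_right]
  · intro j hj j' hj' hne
    rw [Finset.mem_coe, Finset.mem_range] at hj hj'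
    rw [Function.onFun, Finset.disjoint_left]
    intro z hz hz'
    rw [Finset.mem_image] at hz hz'
    obtain ⟨i, hi, rfl⟩ := hz
    obtain ⟨i', hi', heq⟩ := hz'
    rw [Finset.mem_range] at hi hi'
    apply hne
    by_contra hnejj
    rcases Nat.lt_or_ge j j' with h | h
    · have := congrArg (fun l => l.getD j' 0) heq.symm
      simp only [sB_getD hi hj, sB_getD hi' hj'] at this
      split_ifs at this <;> omega
    · have hlt : j' < j := by omega
      have := congrArg (fun l => l.getD j 0) heq.symm
      simp only [sB_getD hi hj, sB_getD hi' hj'] at this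
      split_ifs at this <;> omega

lemma disjoint_AB (n : ℕ) : Disjoint (Aset n) (Bset n) := by
  rw [Finset.disjoint_left]
  intro z hz hz'
  rw [Aset, Finset.mem_image] at hz
  obtain ⟨f, -, rfl⟩ := hz
  rw [Bset, Finset.mem_biUnion] at hz'
  obtain ⟨j, hj, hz'⟩ := hz'
  rw [Finset.mem_image] at hz'
  obtain ⟨i, hi, heq⟩ := hz'
  rw [Finset.mem_range] at hj hi
  have h1 := congrArg (fun l => l.getD j 0) heq
  have h2 := congrArg (fun l => l.getD (j + 1) 0) heq
  simp only [sB_getD hi hj] at h1 h2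
  have h3 := (psum_mono_step (List.ofFn f) j (by simp; omega)).1
  split_ifs at h1 h2 <;> omega

theorem stmt_16 (n : ℕ) (hn : 1 ≤ n) :
    Nat.card {x : List ℕ // x.length = n ∧ IsAscSeq x ∧ Avoids [0, 1, 0, 1] x ∧ Avoids [0, 1, 0, 2] x ∧ Avoids [0, 1, 2, 0] x ∧ Avoids [0, 1, 2, 1] x} = 2 ^ (n - 1) + Nat.choose (n - 1) 2 := by
  have hiff : ∀ x : List ℕ,
      (x.length = n ∧ IsAscSeq x ∧ Avoids [0, 1, 0, 1] x ∧ Avoids [0, 1, 0, 2] x ∧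
        Avoids [0, 1, 2, 0] x ∧ Avoids [0, 1, 2, 1] x) ↔ x ∈ Aset n ∪ Bset n := by
    intro x
    constructor
    · rintro ⟨hl, ha, h1, h2, h3, h4⟩
      exact forward hn x hl ha h1 h2 h3 h4
    · intro hx
      rw [Finset.mem_union] at hx
      rcases hx with hx | hx
      · exact aset_props hn x hx
      · exact bset_props x hx
  rw [Nat.card_congr (Equiv.subtypeEquivRight hiff), Nat.card_eq_finsetCard,
    Finset.card_union_of_disjoint (disjoint_AB n), card_Aset hn, card_Bset]
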